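/- Let ϖ, ρ, σ : ℝ³ → ℝ be continuously differentiable 2-homogeneous functions, and let u, v, w : ℝ³ → ℝ be twice continuously differentiable functions each satisfying the linear PDE f_x·(ϖ − x) + f_y·(ρ − y) + f_z·(σ − z) = −f (for f equal to u, v and w, at every point (x,y,z) ∈ ℝ³). Then at every point (x,y,z) ∈ ℝ³ the 4×4 determinant with first row (2(x·u_x + y·u_y + z·u_z − u), x·u_xx + y·u_xy + z·u_xz, x·u_xy + y·u_yy + z·u_yz, x·u_xz + y·u_yz + z·u_zz), second row (u, u_x, u_y, u_z), third row (v, v_x, v_y, v_z) and fourth row (w, w_x, w_y, w_z) vanishes. -/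

import Mathlib

noncomputable section StmtAux

abbrev E3 : Type := ℝ × ℝ × ℝ

lemma hasDerivAt_comp_curve {F : E3 → ℝ} (hF : Differentiable ℝ F) {γ : ℝ → E3} {d : E3}
    {t : ℝ} (hγ : HasDerivAt γ d t) :
    HasDerivAt (fun s => F (γ s)) (fderiv ℝ F (γ t) d) t := by
  simpa [Function.comp_def] using (hF (γ t)).hasFDerivAt.comp_hasDerivAt t hγ

lemma hasDerivAt_fderiv_comp_curve {F : E3 → ℝ} (hF : ContDiff ℝ 2 F) (v : E3) {γ : ℝ → E3}
    {d : E3} {t : ℝ} (hγ : HasDerivAt γ d t) :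
    HasDerivAt (fun s => fderiv ℝ F (γ s) v) (fderiv ℝ (fderiv ℝ F) (γ t) d v) t := by
  have h1 : Differentiable ℝ (fderiv ℝ F) :=
    (hF.fderiv_right (le_refl ((1:WithTop ℕ∞) + 1))).differentiable one_ne_zero
  have h2 : HasDerivAt (fun s => fderiv ℝ F (γ s)) (fderiv ℝ (fderiv ℝ F) (γ t) d) t := by
    simpa [Function.comp_def] using (h1 (γ t)).hasFDerivAt.comp_hasDerivAt t hγ
  simpa [Function.comp_def] using
    (ContinuousLinearMap.apply ℝ ℝ v).hasFDerivAt.comp_hasDerivAt t h2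

lemma curve1 (b c t : ℝ) : HasDerivAt (fun s : ℝ => ((s, b, c) : E3)) ((1,0,0) : E3) t :=
  (hasDerivAt_id t).prodMk ((hasDerivAt_const t b).prodMk (hasDerivAt_const t c))

lemma curve2 (a c t : ℝ) : HasDerivAt (fun s : ℝ => ((a, s, c) : E3)) ((0,1,0) : E3) t :=
  (hasDerivAt_const t a).prodMk ((hasDerivAt_id t).prodMk (hasDerivAt_const t c))

lemma curve3 (a b t : ℝ) : HasDerivAt (fun s : ℝ => ((a, b, s) : E3)) ((0,0,1) : E3) t :=
  (hasDerivAt_const t a).prodMk ((hasDerivAt_const t b).prodMk (hasDerivAt_id t))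

lemma euler_id {W : E3 → ℝ} (hW : ContDiff ℝ 1 W)
    (hhom : ∀ t x y z : ℝ, W (t*x, t*y, t*z) = t^2 * W (x,y,z)) (x y z : ℝ) :
    x * fderiv ℝ W (x,y,z) (1,0,0) + y * fderiv ℝ W (x,y,z) (0,1,0)
      + z * fderiv ℝ W (x,y,z) (0,0,1) = 2 * W (x,y,z) := by
  have hdW : Differentiable ℝ W := hW.differentiable one_ne_zero
  have hγ : HasDerivAt (fun t : ℝ => ((t*x, t*y, t*z) : E3)) ((x,y,z) : E3) 1 := by
    have h1 : HasDerivAt (fun t:ℝ => t*x) x 1 := by simpa using (hasDerivAt_id (1:ℝ)).mul_const x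
    have h2 : HasDerivAt (fun t:ℝ => t*y) y 1 := by simpa using (hasDerivAt_id (1:ℝ)).mul_const y
    have h3 : HasDerivAt (fun t:ℝ => t*z) z 1 := by simpa using (hasDerivAt_id (1:ℝ)).mul_const z
    exact h1.prodMk (h2.prodMk h3)
  have hA : HasDerivAt (fun t => W (t*x,t*y,t*z)) (fderiv ℝ W (x,y,z) (x,y,z)) 1 := by
    have := hasDerivAt_comp_curve hdW hγ
    simpa using this
  have hB : HasDerivAt (fun t => W (t*x,t*y,t*z)) (2 * W (x,y,z)) 1 := by
    have h : HasDerivAt (fun t:ℝ => t^2 * W (x,y,z)) (2 * W (x,y,z)) 1 := by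
      simpa using (hasDerivAt_pow 2 (1:ℝ)).mul_const (W (x,y,z))
    have hfun : (fun t:ℝ => t^2 * W (x,y,z)) = fun t => W (t*x,t*y,t*z) :=
      funext fun t => (hhom t x y z).symm
    rwa [hfun] at h
  have hu := hA.unique hB
  have hdecomp : ((x,y,z) : E3) = x • ((1,0,0):E3) + y • ((0,1,0):E3) + z • ((0,0,1):E3) := by
    simp [Prod.ext_iff]
  rw [hdecomp, map_add, map_add, map_smul, map_smul, map_smul] at hu
  simpa [smul_eq_mul] using hu

lemma diff_pde {F W R S : E3 → ℝ} (hF : ContDiff ℝ 2 F) (hW : ContDiff ℝ 1 W)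
    (hR : ContDiff ℝ 1 R) (hS : ContDiff ℝ 1 S)
    (hpde : ∀ p : E3, fderiv ℝ F p (1,0,0) * (W p - p.1) + fderiv ℝ F p (0,1,0) * (R p - p.2.1)
      + fderiv ℝ F p (0,0,1) * (S p - p.2.2) + F p = 0)
    (p d : E3) :
    fderiv ℝ (fderiv ℝ F) p d (1,0,0) * (W p - p.1)
      + fderiv ℝ F p (1,0,0) * (fderiv ℝ W p d - d.1)
      + fderiv ℝ (fderiv ℝ F) p d (0,1,0) * (R p - p.2.1)
      + fderiv ℝ F p (0,1,0) * (fderiv ℝ R p d - d.2.1)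
      + fderiv ℝ (fderiv ℝ F) p d (0,0,1) * (S p - p.2.2)
      + fderiv ℝ F p (0,0,1) * (fderiv ℝ S p d - d.2.2)
      + fderiv ℝ F p d = 0 := by
  have hFd : Differentiable ℝ F := hF.differentiable two_ne_zero
  have hWd : Differentiable ℝ W := hW.differentiable one_ne_zero
  have hRd : Differentiable ℝ R := hR.differentiable one_ne_zero
  have hSd : Differentiable ℝ S := hS.differentiable one_ne_zero
  set γ : ℝ → E3 := fun s => (p.1 + s * d.1, p.2.1 + s * d.2.1, p.2.2 + s * d.2.2) with hγdef
  have hγ0 : γ 0 = p := by simp [hγdef]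
  have hγ : HasDerivAt γ d 0 := by
    have h1 : HasDerivAt (fun s:ℝ => p.1 + s * d.1) d.1 0 := by
      simpa using ((hasDerivAt_id (0:ℝ)).mul_const d.1).const_add p.1
    have h2 : HasDerivAt (fun s:ℝ => p.2.1 + s * d.2.1) d.2.1 0 := by
      simpa using ((hasDerivAt_id (0:ℝ)).mul_const d.2.1).const_add p.2.1
    have h3 : HasDerivAt (fun s:ℝ => p.2.2 + s * d.2.2) d.2.2 0 := by
      simpa using ((hasDerivAt_id (0:ℝ)).mul_const d.2.2).const_add p.2.2
    exact h1.prodMk (h2.prodMk h3)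
  have hc1 : HasDerivAt (fun s => (γ s).1) d.1 0 := by
    simpa [hγdef] using ((hasDerivAt_id (0:ℝ)).mul_const d.1).const_add p.1
  have hc2 : HasDerivAt (fun s => (γ s).2.1) d.2.1 0 := by
    simpa [hγdef] using ((hasDerivAt_id (0:ℝ)).mul_const d.2.1).const_add p.2.1
  have hc3 : HasDerivAt (fun s => (γ s).2.2) d.2.2 0 := by
    simpa [hγdef] using ((hasDerivAt_id (0:ℝ)).mul_const d.2.2).const_add p.2.2
  have hT1 : HasDerivAt (fun s => fderiv ℝ F (γ s) (1,0,0) * (W (γ s) - (γ s).1))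
      (fderiv ℝ (fderiv ℝ F) p d (1,0,0) * (W p - p.1)
        + fderiv ℝ F p (1,0,0) * (fderiv ℝ W p d - d.1)) 0 := by
    have := (hasDerivAt_fderiv_comp_curve hF (1,0,0) hγ).mul
      ((hasDerivAt_comp_curve hWd hγ).sub hc1)
    simp only [Pi.sub_apply, hγ0] at this; exact this
  have hT2 : HasDerivAt (fun s => fderiv ℝ F (γ s) (0,1,0) * (R (γ s) - (γ s).2.1))
      (fderiv ℝ (fderiv ℝ F) p d (0,1,0) * (R p - p.2.1)
        + fderiv ℝ F p (0,1,0) * (fderiv ℝ R p d - d.2.1)) 0 := by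
    have := (hasDerivAt_fderiv_comp_curve hF (0,1,0) hγ).mul
      ((hasDerivAt_comp_curve hRd hγ).sub hc2)
    simp only [Pi.sub_apply, hγ0] at this; exact this
  have hT3 : HasDerivAt (fun s => fderiv ℝ F (γ s) (0,0,1) * (S (γ s) - (γ s).2.2))
      (fderiv ℝ (fderiv ℝ F) p d (0,0,1) * (S p - p.2.2)
        + fderiv ℝ F p (0,0,1) * (fderiv ℝ S p d - d.2.2)) 0 := by
    have := (hasDerivAt_fderiv_comp_curve hF (0,0,1) hγ).mul
      ((hasDerivAt_comp_curve hSd hγ).sub hc3)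
    simp only [Pi.sub_apply, hγ0] at this; exact this
  have hT4 : HasDerivAt (fun s => F (γ s)) (fderiv ℝ F p d) 0 := by
    have := hasDerivAt_comp_curve hFd hγ
    rwa [hγ0] at this
  have htot := ((hT1.add hT2).add hT3).add hT4
  have hzero : (fun s => fderiv ℝ F (γ s) (1,0,0) * (W (γ s) - (γ s).1)
      + fderiv ℝ F (γ s) (0,1,0) * (R (γ s) - (γ s).2.1)
      + fderiv ℝ F (γ s) (0,0,1) * (S (γ s) - (γ s).2.2) + F (γ s)) = fun _ => (0:ℝ) :=
    funext fun s => hpde (γ s)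
  simp only [Pi.add_def] at htot
  rw [hzero] at htot
  have := htot.unique (hasDerivAt_const 0 0)
  linarith [this]

end StmtAux


/-- any triple `u, v, w` of solutions of the linear flow PDE
satisfies the nonlinear 4×4 determinant PDE (stated here for `u`). -/
theorem stmt_1
    (ϖ ρ σ u v w : ℝ → ℝ → ℝ → ℝ)
    (hϖ : ContDiff ℝ 1 (fun p : ℝ × ℝ × ℝ => ϖ p.1 p.2.1 p.2.2))
    (hρ : ContDiff ℝ 1 (fun p : ℝ × ℝ × ℝ => ρ p.1 p.2.1 p.2.2))
    (hσ : ContDiff ℝ 1 (fun p : ℝ × ℝ × ℝ => σ p.1 p.2.1 p.2.2))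
    (hϖhom : ∀ t x y z : ℝ, ϖ (t * x) (t * y) (t * z) = t ^ 2 * ϖ x y z)
    (hρhom : ∀ t x y z : ℝ, ρ (t * x) (t * y) (t * z) = t ^ 2 * ρ x y z)
    (hσhom : ∀ t x y z : ℝ, σ (t * x) (t * y) (t * z) = t ^ 2 * σ x y z)
    (hu : ContDiff ℝ 2 (fun p : ℝ × ℝ × ℝ => u p.1 p.2.1 p.2.2))
    (hv : ContDiff ℝ 2 (fun p : ℝ × ℝ × ℝ => v p.1 p.2.1 p.2.2))
    (hw : ContDiff ℝ 2 (fun p : ℝ × ℝ × ℝ => w p.1 p.2.1 p.2.2))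
    -- first order partial derivatives
    (ux uy uz vx vy vz wx wy wz : ℝ → ℝ → ℝ → ℝ)
    (hux : ∀ x y z, ux x y z = deriv (fun s => u s y z) x)
    (huy : ∀ x y z, uy x y z = deriv (fun s => u x s z) y)
    (huz : ∀ x y z, uz x y z = deriv (fun s => u x y s) z)
    (hvx : ∀ x y z, vx x y z = deriv (fun s => v s y z) x)
    (hvy : ∀ x y z, vy x y z = deriv (fun s => v x s z) y)
    (hvz : ∀ x y z, vz x y z = deriv (fun s => v x y s) z)
    (hwx : ∀ x y z, wx x y z = deriv (fun s => w s y z) x)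
    (hwy : ∀ x y z, wy x y z = deriv (fun s => w x s z) y)
    (hwz : ∀ x y z, wz x y z = deriv (fun s => w x y s) z)
    -- second order partial derivatives of u
    (uxx uxy uxz uyy uyz uzz : ℝ → ℝ → ℝ → ℝ)
    (huxx : ∀ x y z, uxx x y z = deriv (fun s => ux s y z) x)
    (huxy : ∀ x y z, uxy x y z = deriv (fun s => ux x s z) y)
    (huxz : ∀ x y z, uxz x y z = deriv (fun s => ux x y s) z)
    (huyy : ∀ x y z, uyy x y z = deriv (fun s => uy x s z) y)
    (huyz : ∀ x y z, uyz x y z = deriv (fun s => uy x y s) z)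
    (huzz : ∀ x y z, uzz x y z = deriv (fun s => uz x y s) z)
    -- the linear PDE for u, v, w
    (hpdeu : ∀ x y z : ℝ,
      ux x y z * (ϖ x y z - x) + uy x y z * (ρ x y z - y) + uz x y z * (σ x y z - z)
        = -(u x y z))
    (hpdev : ∀ x y z : ℝ,
      vx x y z * (ϖ x y z - x) + vy x y z * (ρ x y z - y) + vz x y z * (σ x y z - z)
        = -(v x y z))
    (hpdew : ∀ x y z : ℝ,
      wx x y z * (ϖ x y z - x) + wy x y z * (ρ x y z - y) + wz x y z * (σ x y z - z)
        = -(w x y z)) :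
    ∀ x y z : ℝ,
      Matrix.det
        !![2 * (x * ux x y z + y * uy x y z + z * uz x y z - u x y z),
            x * uxx x y z + y * uxy x y z + z * uxz x y z,
            x * uxy x y z + y * uyy x y z + z * uyz x y z,
            x * uxz x y z + y * uyz x y z + z * uzz x y z;
          u x y z, ux x y z, uy x y z, uz x y z;
          v x y z, vx x y z, vy x y z, vz x y z;
          w x y z, wx x y z, wy x y z, wz x y z] = 0 := by
  intro x y z
  set Fu : E3 → ℝ := fun p => u p.1 p.2.1 p.2.2 with hFu_def
  set Pw : E3 → ℝ := fun p => ϖ p.1 p.2.1 p.2.2 with hPw_def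
  set Pr : E3 → ℝ := fun p => ρ p.1 p.2.1 p.2.2 with hPr_def
  set Ps : E3 → ℝ := fun p => σ p.1 p.2.1 p.2.2 with hPs_def
  have hFu2 : ContDiff ℝ 2 Fu := hu
  have hFud : Differentiable ℝ Fu := hFu2.differentiable two_ne_zero
  have hPwc : ContDiff ℝ 1 Pw := hϖ
  have hPrc : ContDiff ℝ 1 Pr := hρ
  have hPsc : ContDiff ℝ 1 Ps := hσ
  -- first-order partials of u as fderivs
  have hux' : ∀ a b c : ℝ, ux a b c = fderiv ℝ Fu (a,b,c) (1,0,0) := fun a b c => by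
    rw [hux]; exact (hasDerivAt_comp_curve hFud (curve1 b c a)).deriv
  have huy' : ∀ a b c : ℝ, uy a b c = fderiv ℝ Fu (a,b,c) (0,1,0) := fun a b c => by
    rw [huy]; exact (hasDerivAt_comp_curve hFud (curve2 a c b)).deriv
  have huz' : ∀ a b c : ℝ, uz a b c = fderiv ℝ Fu (a,b,c) (0,0,1) := fun a b c => by
    rw [huz]; exact (hasDerivAt_comp_curve hFud (curve3 a b c)).deriv
  -- second-order partials of u as second fderivs
  have huxx' : uxx x y z = fderiv ℝ (fderiv ℝ Fu) (x,y,z) (1,0,0) (1,0,0) := by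
    rw [huxx]
    have hfun : (fun s => ux s y z) = fun s => fderiv ℝ Fu (s,y,z) (1,0,0) :=
      funext fun s => hux' s y z
    rw [hfun]; exact (hasDerivAt_fderiv_comp_curve hFu2 (1,0,0) (curve1 y z x)).deriv
  have huxy' : uxy x y z = fderiv ℝ (fderiv ℝ Fu) (x,y,z) (0,1,0) (1,0,0) := by
    rw [huxy]
    have hfun : (fun s => ux x s z) = fun s => fderiv ℝ Fu (x,s,z) (1,0,0) :=
      funext fun s => hux' x s z
    rw [hfun]; exact (hasDerivAt_fderiv_comp_curve hFu2 (1,0,0) (curve2 x z y)).deriv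
  have huxz' : uxz x y z = fderiv ℝ (fderiv ℝ Fu) (x,y,z) (0,0,1) (1,0,0) := by
    rw [huxz]
    have hfun : (fun s => ux x y s) = fun s => fderiv ℝ Fu (x,y,s) (1,0,0) :=
      funext fun s => hux' x y s
    rw [hfun]; exact (hasDerivAt_fderiv_comp_curve hFu2 (1,0,0) (curve3 x y z)).deriv
  have huyy' : uyy x y z = fderiv ℝ (fderiv ℝ Fu) (x,y,z) (0,1,0) (0,1,0) := by
    rw [huyy]
    have hfun : (fun s => uy x s z) = fun s => fderiv ℝ Fu (x,s,z) (0,1,0) :=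
      funext fun s => huy' x s z
    rw [hfun]; exact (hasDerivAt_fderiv_comp_curve hFu2 (0,1,0) (curve2 x z y)).deriv
  have huyz' : uyz x y z = fderiv ℝ (fderiv ℝ Fu) (x,y,z) (0,0,1) (0,1,0) := by
    rw [huyz]
    have hfun : (fun s => uy x y s) = fun s => fderiv ℝ Fu (x,y,s) (0,1,0) :=
      funext fun s => huy' x y s
    rw [hfun]; exact (hasDerivAt_fderiv_comp_curve hFu2 (0,1,0) (curve3 x y z)).deriv
  have huzz' : uzz x y z = fderiv ℝ (fderiv ℝ Fu) (x,y,z) (0,0,1) (0,0,1) := by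
    rw [huzz]
    have hfun : (fun s => uz x y s) = fun s => fderiv ℝ Fu (x,y,s) (0,0,1) :=
      funext fun s => huz' x y s
    rw [hfun]; exact (hasDerivAt_fderiv_comp_curve hFu2 (0,0,1) (curve3 x y z)).deriv
  -- the PDE for u in fderiv form
  have hpdeu' : ∀ p : E3, fderiv ℝ Fu p (1,0,0) * (Pw p - p.1)
      + fderiv ℝ Fu p (0,1,0) * (Pr p - p.2.1)
      + fderiv ℝ Fu p (0,0,1) * (Ps p - p.2.2) + Fu p = 0 := by
    intro p
    have h := hpdeu p.1 p.2.1 p.2.2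
    rw [hux', huy', huz'] at h
    have : Fu p = u p.1 p.2.1 p.2.2 := rfl
    rw [show ((p.1, p.2.1, p.2.2) : E3) = p from rfl] at h
    linarith [h]
  -- differentiated PDE in the three coordinate directions
  have h1 := diff_pde hFu2 hPwc hPrc hPsc hpdeu' (x,y,z) (1,0,0)
  have h2 := diff_pde hFu2 hPwc hPrc hPsc hpdeu' (x,y,z) (0,1,0)
  have h3 := diff_pde hFu2 hPwc hPrc hPsc hpdeu' (x,y,z) (0,0,1)
  simp only [] at h1 h2 h3
  -- Euler identities
  have hEw := euler_id hPwc (fun t a b c => hϖhom t a b c) x y z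
  have hEr := euler_id hPrc (fun t a b c => hρhom t a b c) x y z
  have hEs := euler_id hPsc (fun t a b c => hσhom t a b c) x y z
  -- symmetry of the second derivative
  have hsym : IsSymmSndFDerivAt ℝ Fu (x,y,z) := hFu2.contDiffAt.isSymmSndFDerivAt (by simp [minSmoothness_of_isRCLikeNormedField])
  have hs12 := hsym (1,0,0) (0,1,0)
  have hs13 := hsym (1,0,0) (0,0,1)
  have hs23 := hsym (0,1,0) (0,0,1)
  have hp := hpdeu' (x,y,z)
  -- key identity: first row is orthogonal to (1, ϖ-x, ρ-y, σ-z)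
  have hrow0 : 2 * (x * ux x y z + y * uy x y z + z * uz x y z - u x y z) * 1
      + (x * uxx x y z + y * uxy x y z + z * uxz x y z) * (ϖ x y z - x)
      + (x * uxy x y z + y * uyy x y z + z * uyz x y z) * (ρ x y z - y)
      + (x * uxz x y z + y * uyz x y z + z * uzz x y z) * (σ x y z - z) = 0 := by
    rw [hux' x y z, huy' x y z, huz' x y z, huxx', huxy', huxz', huyy', huyz', huzz']
    show 2 * (x * fderiv ℝ Fu (x,y,z) (1,0,0) + y * fderiv ℝ Fu (x,y,z) (0,1,0)
        + z * fderiv ℝ Fu (x,y,z) (0,0,1) - Fu (x,y,z)) * 1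
      + (x * fderiv ℝ (fderiv ℝ Fu) (x,y,z) (1,0,0) (1,0,0)
          + y * fderiv ℝ (fderiv ℝ Fu) (x,y,z) (0,1,0) (1,0,0)
          + z * fderiv ℝ (fderiv ℝ Fu) (x,y,z) (0,0,1) (1,0,0)) * (Pw (x,y,z) - x)
      + (x * fderiv ℝ (fderiv ℝ Fu) (x,y,z) (0,1,0) (1,0,0)
          + y * fderiv ℝ (fderiv ℝ Fu) (x,y,z) (0,1,0) (0,1,0)
          + z * fderiv ℝ (fderiv ℝ Fu) (x,y,z) (0,0,1) (0,1,0)) * (Pr (x,y,z) - y)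
      + (x * fderiv ℝ (fderiv ℝ Fu) (x,y,z) (0,0,1) (1,0,0)
          + y * fderiv ℝ (fderiv ℝ Fu) (x,y,z) (0,0,1) (0,1,0)
          + z * fderiv ℝ (fderiv ℝ Fu) (x,y,z) (0,0,1) (0,0,1)) * (Ps (x,y,z) - z) = 0
    linear_combination x * h1 + y * h2 + z * h3
      - fderiv ℝ Fu (x,y,z) (1,0,0) * hEw - fderiv ℝ Fu (x,y,z) (0,1,0) * hEr
      - fderiv ℝ Fu (x,y,z) (0,0,1) * hEs - 2 * hp
      - x * (Pr (x,y,z) - y) * hs12 - x * (Ps (x,y,z) - z) * hs13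
      - y * (Ps (x,y,z) - z) * hs23
  -- rows 2–4 are orthogonal to the same vector
  have hrowu := hpdeu x y z
  have hrowv := hpdev x y z
  have hroww := hpdew x y z
  -- conclude det = 0 from the common kernel vector
  rw [← Matrix.exists_mulVec_eq_zero_iff]
  refine ⟨![1, ϖ x y z - x, ρ x y z - y, σ x y z - z], ?_, ?_⟩
  · intro h
    have := congrFun h 0
    simp at this
  · funext i
    fin_cases i <;>
      simp [Matrix.mulVec, dotProduct, Fin.sum_univ_four] <;>
      linarith [hrow0, hrowu, hrowv, hroww]
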